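/- Fix θ₀ ∈ ℝᵈ, g ∈ ℝᵈ with g ≠ 0, constants L₀ ∈ ℝ, ε ≥ 0, c > 0, and suppose L₀ ≤ -ε. Define L̂(θ) = L₀ + ⟨g, θ - θ₀⟩. Then the convex optimization problem minimize over (θ, ξ) the quantity ‖θ - θ₀‖² + c·ξ² subject to max(-ε - L̂(θ), 0) ≤ ξ, has unique minimizer θ* = θ₀ + c·(-ε - L₀)/(1 + c‖g‖²) · g, with ξ* = (-ε - L₀)/(1 + c‖g‖²). -/

import Mathlib

open scoped RealInnerProductSpace

lemma pa_scalar_le (G c a s ξ w : ℝ) (hG : 0 < G) (hc : 0 < c) (ha : 0 ≤ a)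
    (hw : 0 ≤ w) (h1 : a - s ≤ ξ) (h2 : 0 ≤ ξ) :
    c * a ^ 2 / (1 + c * G) ≤ s ^ 2 / G + w + c * ξ ^ 2 := by
  have hD : (0:ℝ) < 1 + c * G := by positivity
  have hu : 0 ≤ s ^ 2 / G := by positivity
  rcases le_or_gt a ξ with h | h
  · have h3 : c * a ^ 2 / (1 + c * G) ≤ c * a ^ 2 :=
      div_le_self (by positivity) (by nlinarith)
    have h4 : a ^ 2 ≤ ξ ^ 2 := by nlinarith
    nlinarith
  · have hs : a - ξ ≤ s := by linarith
    have h4 : (a - ξ) ^ 2 ≤ s ^ 2 := by nlinarith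
    have h5 : (a - ξ) ^ 2 / G ≤ s ^ 2 / G := by gcongr
    have h6 : c * a ^ 2 / (1 + c * G) ≤ (a - ξ) ^ 2 / G + c * ξ ^ 2 := by
      rw [div_add' _ _ _ hG.ne', div_le_div_iff₀ hD hG]
      nlinarith [sq_nonneg (a - (1 + c * G) * ξ)]
    linarith

lemma pa_scalar_eq (G c a s ξ w : ℝ) (hG : 0 < G) (hc : 0 < c) (ha : 0 ≤ a)
    (hw : 0 ≤ w) (h1 : a - s ≤ ξ) (h2 : 0 ≤ ξ)
    (heq : s ^ 2 / G + w + c * ξ ^ 2 = c * a ^ 2 / (1 + c * G)) :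
    w = 0 ∧ s = c * G * a / (1 + c * G) ∧ ξ = a / (1 + c * G) := by
  have hD : (0:ℝ) < 1 + c * G := by positivity
  have hle := pa_scalar_le G c a s ξ 0 hG hc ha le_rfl h1 h2
  have hw0 : w = 0 := by linarith
  subst hw0
  have heq' : s ^ 2 / G + c * ξ ^ 2 = c * a ^ 2 / (1 + c * G) := by linarith
  have key : s ^ 2 * (1 + c * G) + c * ξ ^ 2 * G * (1 + c * G) = c * a ^ 2 * G := by
    field_simp at heq'
    linarith
  refine ⟨rfl, ?_⟩
  rcases le_or_gt a ξ with h | h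
  · -- forces s = 0, ξ = 0, a = 0
    have h4 : a ^ 2 ≤ ξ ^ 2 := by nlinarith
    have hs20 : s ^ 2 = 0 := le_antisymm (by
      nlinarith [mul_nonneg (mul_pos hc hG).le (sub_nonneg.mpr h4),
        mul_nonneg (mul_nonneg (mul_nonneg hc.le (sq_nonneg ξ)) hG.le)
          (mul_nonneg hc.le hG.le)]) (sq_nonneg s)
    have hs0 : s = 0 := pow_eq_zero_iff (n := 2) (by norm_num) |>.mp hs20
    have hx20 : ξ ^ 2 = 0 := le_antisymm (by
      nlinarith [mul_nonneg (mul_pos hc hG).le (sub_nonneg.mpr h4),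
        mul_pos (mul_pos hc hG) (mul_pos hc hG)]) (sq_nonneg ξ)
    have hx0 : ξ = 0 := pow_eq_zero_iff (n := 2) (by norm_num) |>.mp hx20
    have ha20 : a ^ 2 = 0 := le_antisymm (by nlinarith) (sq_nonneg a)
    have ha0 : a = 0 := pow_eq_zero_iff (n := 2) (by norm_num) |>.mp ha20
    constructor <;> simp [hs0, hx0, ha0]
  · have hs : a - ξ ≤ s := by linarith
    have hsp : 0 < s + (a - ξ) := by linarith
    have hid : (1 + c * G) * (s ^ 2 - (a - ξ) ^ 2) + (a - (1 + c * G) * ξ) ^ 2 = 0 := by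
      linear_combination key
    have h4 : (a - ξ) ^ 2 ≤ s ^ 2 := by
      nlinarith [mul_nonneg (sub_nonneg.mpr hs) hsp.le]
    have hA : 0 ≤ (1 + c * G) * (s ^ 2 - (a - ξ) ^ 2) :=
      mul_nonneg hD.le (by linarith)
    have hB0 : (a - (1 + c * G) * ξ) ^ 2 = 0 :=
      le_antisymm (by linarith) (sq_nonneg _)
    have hB : a = (1 + c * G) * ξ := by
      have := pow_eq_zero_iff (n := 2) (by norm_num) |>.mp hB0
      linarith
    have hAe : (1 + c * G) * (s ^ 2 - (a - ξ) ^ 2) = 0 := by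
      have := sq_nonneg (a - (1 + c * G) * ξ)
      linarith
    have hA0 : s ^ 2 = (a - ξ) ^ 2 := by
      rcases mul_eq_zero.mp hAe with h' | h'
      · exact absurd h' hD.ne'
      · linarith
    have hprod : (s - (a - ξ)) * (s + (a - ξ)) = 0 := by linear_combination hA0
    have hseq : s = a - ξ := by
      rcases mul_eq_zero.mp hprod with h' | h'
      · linarith
      · exact absurd h' hsp.ne'
    constructor
    · rw [eq_div_iff hD.ne']; linear_combination (1 + c * G) * hseq + hB
    · rw [eq_div_iff hD.ne']; linear_combination -hB

theorem pa_update_minimizer (d : ℕ) (θ₀ g : EuclideanSpace ℝ (Fin d)) (hg : g ≠ 0)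
    (L₀ ε c : ℝ) (hε : 0 ≤ ε) (hc : 0 < c) (hL : L₀ ≤ -ε) :
    (max (-ε - (L₀ + ⟪g, (θ₀ + (c * (-ε - L₀) / (1 + c * ‖g‖ ^ 2)) • g) - θ₀⟫)) 0
        ≤ (-ε - L₀) / (1 + c * ‖g‖ ^ 2)) ∧
    (∀ (θ : EuclideanSpace ℝ (Fin d)) (ξ : ℝ),
      max (-ε - (L₀ + ⟪g, θ - θ₀⟫)) 0 ≤ ξ →
      ‖(θ₀ + (c * (-ε - L₀) / (1 + c * ‖g‖ ^ 2)) • g) - θ₀‖ ^ 2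
          + c * ((-ε - L₀) / (1 + c * ‖g‖ ^ 2)) ^ 2
        ≤ ‖θ - θ₀‖ ^ 2 + c * ξ ^ 2) ∧
    (∀ (θ : EuclideanSpace ℝ (Fin d)) (ξ : ℝ),
      max (-ε - (L₀ + ⟪g, θ - θ₀⟫)) 0 ≤ ξ →
      ‖θ - θ₀‖ ^ 2 + c * ξ ^ 2
        = ‖(θ₀ + (c * (-ε - L₀) / (1 + c * ‖g‖ ^ 2)) • g) - θ₀‖ ^ 2
            + c * ((-ε - L₀) / (1 + c * ‖g‖ ^ 2)) ^ 2 →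
      θ = θ₀ + (c * (-ε - L₀) / (1 + c * ‖g‖ ^ 2)) • g ∧
      ξ = (-ε - L₀) / (1 + c * ‖g‖ ^ 2)) := by
  set a : ℝ := -ε - L₀ with ha_def
  have ha : 0 ≤ a := by simp [ha_def]; linarith
  have hgn : 0 < ‖g‖ := norm_pos_iff.mpr hg
  set G : ℝ := ‖g‖ ^ 2 with hG_def
  have hG : 0 < G := by positivity
  have hD : (0:ℝ) < 1 + c * G := by positivity
  set t : ℝ := c * a / (1 + c * G) with ht_def
  have hstar : (θ₀ + t • g) - θ₀ = t • g := add_sub_cancel_left θ₀ (t • g)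
  have hinner_star : ⟪g, t • g⟫ = t * G := by
    rw [real_inner_smul_right, real_inner_self_eq_norm_sq]
  have hnorm_star : ‖t • g‖ ^ 2 = t ^ 2 * G := by
    rw [norm_smul, mul_pow, Real.norm_eq_abs, sq_abs]
  have hobj_star : t ^ 2 * G + c * (a / (1 + c * G)) ^ 2 = c * a ^ 2 / (1 + c * G) := by
    rw [ht_def]; field_simp; ring
  -- decomposition
  have hdecomp : ∀ θ : EuclideanSpace ℝ (Fin d),
      ‖θ - θ₀‖ ^ 2 = ⟪g, θ - θ₀⟫ ^ 2 / G
        + ‖(θ - θ₀) - (⟪g, θ - θ₀⟫ / G) • g‖ ^ 2 := by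
    intro θ
    set v := θ - θ₀
    set s := ⟪g, v⟫ with hs_def
    have h1 : ‖v - (s / G) • g‖ ^ 2 = ‖v‖ ^ 2 - 2 * ⟪v, (s / G) • g⟫ + ‖(s / G) • g‖ ^ 2 :=
      norm_sub_sq_real v _
    have h2 : ⟪v, (s / G) • g⟫ = (s / G) * s := by
      rw [real_inner_smul_right, real_inner_comm]
    have h3 : ‖(s / G) • g‖ ^ 2 = (s / G) ^ 2 * G := by
      rw [norm_smul, mul_pow, Real.norm_eq_abs, sq_abs]
    rw [h1, h2, h3]
    field_simp
    ring
  have hconstraint : ∀ (θ : EuclideanSpace ℝ (Fin d)) (ξ : ℝ),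
      max (-ε - (L₀ + ⟪g, θ - θ₀⟫)) 0 ≤ ξ → a - ⟪g, θ - θ₀⟫ ≤ ξ ∧ 0 ≤ ξ := by
    intro θ ξ h
    exact ⟨le_trans (by rw [ha_def]; apply le_max_of_le_left; ring_nf; rfl) h,
      le_trans (le_max_right _ _) h⟩
  refine ⟨?_, ?_, ?_⟩
  · -- feasibility
    rw [hstar, hinner_star]
    have hval : -ε - (L₀ + t * G) = a / (1 + c * G) := by
      rw [ht_def, ha_def]; field_simp; ring
    rw [hval, max_le_iff]
    exact ⟨le_refl _, by positivity⟩
  · intro θ ξ hcon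
    obtain ⟨hc1, hc2⟩ := hconstraint θ ξ hcon
    rw [hstar, hnorm_star, hobj_star, hdecomp θ]
    have := pa_scalar_le G c a ⟪g, θ - θ₀⟫ ξ
      (‖(θ - θ₀) - (⟪g, θ - θ₀⟫ / G) • g‖ ^ 2) hG hc ha (by positivity) hc1 hc2
    linarith
  · intro θ ξ hcon heq
    obtain ⟨hc1, hc2⟩ := hconstraint θ ξ hcon
    rw [hstar, hnorm_star, hobj_star, hdecomp θ] at heq
    obtain ⟨hw0, hs, hξ⟩ := pa_scalar_eq G c a ⟪g, θ - θ₀⟫ ξ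
      (‖(θ - θ₀) - (⟪g, θ - θ₀⟫ / G) • g‖ ^ 2) hG hc ha (by positivity) hc1 hc2 heq
    refine ⟨?_, hξ⟩
    have hv : (θ - θ₀) - (⟪g, θ - θ₀⟫ / G) • g = 0 := by
      rw [← norm_eq_zero]
      exact pow_eq_zero_iff (n := 2) (by norm_num) |>.mp hw0
    have hveq : θ - θ₀ = (⟪g, θ - θ₀⟫ / G) • g := sub_eq_zero.mp hv
    have hcoef : ⟪g, θ - θ₀⟫ / G = t := by
      rw [hs, ht_def]; field_simp
    rw [hcoef] at hveq
    exact sub_eq_iff_eq_add'.mp hveq
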